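/- Let C_n be the cycle graph on n ≥ 3 vertices v_1, …, v_n (with v_i adjacent to v_{i+1} and v_n adjacent to v_1), and let f = (f_1, …, f_n) be a divisor of degree 0 on C_n. Then f is good (linearly equivalent to 0) if and only if f_1 + 2 f_2 + ⋯ + (n−2) f_{n−2} + (n−1) f_{n−1} ≡ 0 (mod n). -/

import Mathlib

/-- A finite loopless multigraph on vertex set `V`, given by its symmetric
edge-multiplicity function `e`. -/
structure Multigraph (V : Type*) [Fintype V] [DecidableEq V] where
  e : V → V → ℕ
  symm : ∀ u v, e u v = e v u
  loopless : ∀ v, e v v = 0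

namespace Multigraph

variable {V : Type*} [Fintype V] [DecidableEq V]

/-- The degree of a vertex of a multigraph. -/
def vdeg (G : Multigraph V) (v : V) : ℕ := ∑ u, G.e v u

/-- The number of edges of a multigraph. -/
def edgeCount (G : Multigraph V) : ℕ := (∑ u, ∑ v, G.e u v) / 2

/-- The underlying simple graph (adjacency) of a multigraph. -/
def toSimple (G : Multigraph V) : SimpleGraph V where
  Adj u v := G.e u v ≠ 0
  symm := ⟨fun u v (h : G.e u v ≠ 0) => show G.e v u ≠ 0 by rwa [G.symm]⟩
  loopless := ⟨fun v (h : G.e v v ≠ 0) => h (G.loopless v)⟩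

/-- A multigraph is connected if its underlying simple graph is. -/
def Connected (G : Multigraph V) : Prop := G.toSimple.Connected

/-- The degree of a divisor `f : V → ℤ`. -/
def degree (f : V → ℤ) : ℤ := ∑ v, f v

/-- A divisor is effective if all its values are nonnegative. -/
def Effective (f : V → ℤ) : Prop := ∀ v, 0 ≤ f v

/-- The divisor `x · Δ_G`, where `Δ_G` is the Laplacian matrix of `G`. -/
def lapApply (G : Multigraph V) (x : V → ℤ) : V → ℤ :=
  fun v => x v * (G.vdeg v : ℤ) - ∑ u, x u * (G.e u v : ℤ)

/-- Linear equivalence of divisors: `g = f + x Δ_G` for some `x : V → ℤ`. -/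
def LinEquiv (G : Multigraph V) (f g : V → ℤ) : Prop :=
  ∃ x : V → ℤ, g = f + G.lapApply x

/-- A divisor is L-effective if it is linearly equivalent to an effective divisor. -/
def LEffective (G : Multigraph V) (f : V → ℤ) : Prop :=
  ∃ g : V → ℤ, G.LinEquiv f g ∧ Effective g

/-- The Baker–Norine rank of a divisor: `-1` if `f` is not L-effective, and
otherwise the largest `r ≥ 0` such that `f - λ` is L-effective for every
effective divisor `λ` of degree `r`. -/
noncomputable def rank (G : Multigraph V) (f : V → ℤ) : ℤ :=
  sSup ({-1} ∪ {r : ℤ | 0 ≤ r ∧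
    ∀ l : V → ℤ, Effective l → degree l = r → G.LEffective (f - l)})

/-- The divisor `ε_v`. -/
def epsDiv (v : V) : V → ℤ := fun u => if u = v then 1 else 0

/-- A tree: a connected acyclic (multi)graph. -/
def IsTree (G : Multigraph V) : Prop :=
  G.toSimple.IsTree ∧ ∀ u v, G.e u v ≤ 1

/-- A cycle graph: connected, and every vertex has degree 2. -/
def IsCycleGraph (G : Multigraph V) : Prop :=
  G.Connected ∧ ∀ v, G.vdeg v = 2

/-- An edge: two vertices joined by a single edge. -/
def IsEdgeGraph (G : Multigraph V) : Prop :=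
  Fintype.card V = 2 ∧ G.Connected ∧ ∀ u v, G.e u v ≤ 1

/-- A good divisor (on a cycle): degree `0` and linearly equivalent to `0`. -/
def Good (G : Multigraph V) (f : V → ℤ) : Prop :=
  degree f = 0 ∧ G.LinEquiv f 0

/-- A bad divisor (on a cycle): degree `0` and not linearly equivalent to `0`. -/
def Bad (G : Multigraph V) (f : V → ℤ) : Prop :=
  degree f = 0 ∧ ¬ G.LinEquiv f 0

/-- The induced sub-multigraph on a finite set `S` of vertices. -/
def induce (G : Multigraph V) (S : Finset V) : Multigraph {x // x ∈ S} where
  e a b := G.e a.1 b.1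
  symm := fun a b => G.symm a.1 b.1
  loopless := fun a => G.loopless a.1

/-- `v` decomposes the induced subgraph of `G` on `S` into the induced
subgraphs on `V1` and `U`: they cover `S`, meet exactly in `v`, are both
connected, and there is no edge between `V1 \ {v}` and `U \ {v}`. -/
def DecompOn (G : Multigraph V) (S : Finset V) (v : V) (V1 U : Finset V) : Prop :=
  V1 ∪ U = S ∧ V1 ∩ U = {v} ∧
  (G.induce V1).Connected ∧ (G.induce U).Connected ∧
  ∀ a ∈ V1, ∀ b ∈ U, a ≠ v → b ≠ v → G.e a b = 0

/-- `v` decomposes `G` into the induced subgraphs on `V1` and `U`. -/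
def Decomp (G : Multigraph V) (v : V) (V1 U : Finset V) : Prop :=
  G.DecompOn Finset.univ v V1 U

/-- The contraction `f_{G/H}` of a divisor `f`, where `H = G(U)` and
`G/H = G(V1)`, the cut vertex being `v`. -/
def contractDiv (f : V → ℤ) (v : V) (V1 U : Finset V) : {x // x ∈ V1} → ℤ :=
  fun u => if u.1 = v then ∑ w ∈ U, f w else f u.1

/-- The zero `f_{N(H)}` of a divisor `f`, where `H = G(U)`, the cut vertex
being `v`. -/
def zeroDiv (f : V → ℤ) (v : V) (U : Finset V) : {x // x ∈ U} → ℤ :=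
  fun u => if u.1 = v then - ∑ w ∈ U.erase v, f w else f u.1

/-- `ε_v` as a divisor on an induced subgraph. -/
def epsDivOn (S : Finset V) (v : V) : {x // x ∈ S} → ℤ :=
  fun u => if u.1 = v then 1 else 0

/-- A simple cycle of `G`, given as a sub-multigraph (an edge-multiplicity
function bounded by that of `G`) which is connected on its support and in
which every vertex of its (nonempty) support has degree 2. -/
def IsCycleSubgraph (G : Multigraph V) (h : V → V → ℕ) : Prop :=
  (∀ u v, h u v ≤ G.e u v) ∧ (∀ u v, h u v = h v u) ∧
  (∀ v, (∑ u, h v u = 0) ∨ (∑ u, h v u = 2)) ∧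
  (∃ v, ∑ u, h v u ≠ 0) ∧
  (∀ v w, (∑ u, h v u ≠ 0) → (∑ u, h w u ≠ 0) →
    Relation.ReflTransGen (fun a b => h a b ≠ 0) v w)

/-- The vertex support of a sub-multigraph. -/
def cycleSupport (h : V → V → ℕ) : Finset V :=
  Finset.univ.filter (fun v => ∑ u, h v u ≠ 0)

/-- A cactus: a connected multigraph in which any two distinct simple cycles
have at most one vertex in common (in particular every edge has multiplicity
at most 2, since parallel edges form 2-cycles). -/
def IsCactus (G : Multigraph V) : Prop :=
  G.Connected ∧ (∀ u v, G.e u v ≤ 2) ∧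
  ∀ h₁ h₂ : V → V → ℕ, G.IsCycleSubgraph h₁ → G.IsCycleSubgraph h₂ → h₁ ≠ h₂ →
    (cycleSupport h₁ ∩ cycleSupport h₂).card ≤ 1

/-- One step of a block elimination scheme: `G(S')` is obtained from `G(S)`
by contracting a free block (an edge or a cycle) `G(U)` at the vertex `v`. -/
def BlockStep (G : Multigraph V) (S S' : Finset V) : Prop :=
  ∃ (v : V) (U : Finset V), G.DecompOn S v S' U ∧
    ((G.induce U).IsEdgeGraph ∨ (G.induce U).IsCycleGraph)

/-- A block elimination scheme: a sequence of contractions of free blocks,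
starting from `G` and ending at a single vertex. -/
def HasBlockEliminationScheme (G : Multigraph V) : Prop :=
  ∃ (k : ℕ) (S : ℕ → Finset V), S 0 = Finset.univ ∧ (S k).card = 1 ∧
    ∀ i < k, G.BlockStep (S i) (S (i + 1))

end Multigraph

open Multigraph

variable {V : Type*} [Fintype V] [DecidableEq V]

/-- The cycle graph on `Fin n`, vertex `i` (representing `v_{i+1}`) being
adjacent to `i ± 1 (mod n)`. -/
def cycleGraph (n : ℕ) : Multigraph (Fin n) where
  e i j := if i ≠ j ∧ (((j : ℕ) = ((i : ℕ) + 1) % n) ∨ ((i : ℕ) = ((j : ℕ) + 1) % n))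
    then 1 else 0
  symm := by
    intro u v
    have h : (u ≠ v ∧ (((v : ℕ) = ((u : ℕ) + 1) % n) ∨ ((u : ℕ) = ((v : ℕ) + 1) % n))) ↔
        (v ≠ u ∧ (((u : ℕ) = ((v : ℕ) + 1) % n) ∨ ((v : ℕ) = ((u : ℕ) + 1) % n))) := by
      constructor <;> rintro ⟨h1, h2⟩ <;> exact ⟨h1.symm, h2.symm⟩
    simp only [h]
  loopless := by intro v; simp

section CycleAux

variable {n : ℕ} [NeZero n]

lemma val_add_one' (hn : 3 ≤ n) (v : Fin n) : ((v + 1 : Fin n) : ℕ) = ((v : ℕ) + 1) % n := by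
  rw [Fin.add_def, Fin.val_one', Nat.mod_eq_of_lt (show 1 < n by omega)]

lemma val_sub_one' (hn : 3 ≤ n) (v : Fin n) :
    ((v - 1 : Fin n) : ℕ) = if (v : ℕ) = 0 then n - 1 else (v : ℕ) - 1 := by
  have h1 : (v - 1) + 1 = v := sub_add_cancel v 1
  have h2 := congrArg Fin.val h1
  rw [val_add_one' hn] at h2
  have hb : ((v - 1 : Fin n) : ℕ) < n := (v - 1).isLt
  have hv : (v : ℕ) < n := v.isLt
  rcases Nat.lt_or_ge (((v - 1 : Fin n) : ℕ) + 1) n with h | h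
  · rw [Nat.mod_eq_of_lt h] at h2
    split_ifs with h0 <;> omega
  · have : ((v - 1 : Fin n) : ℕ) + 1 = n := by omega
    rw [this, Nat.mod_self] at h2
    split_ifs with h0 <;> omega

lemma sub_one_ne_add_one (hn : 3 ≤ n) (v : Fin n) : v - 1 ≠ v + 1 := by
  intro h
  have := congrArg Fin.val h
  rw [val_sub_one' hn, val_add_one' hn] at this
  have hv : (v : ℕ) < n := v.isLt
  rcases Nat.lt_or_ge ((v : ℕ) + 1) n with h1 | h1
  · rw [Nat.mod_eq_of_lt h1] at this; split_ifs at this <;> omega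
  · have hm : ((v:ℕ) + 1) % n = 0 := by
      have h2 : (v:ℕ) + 1 = n := by omega
      rw [h2, Nat.mod_self]
    rw [hm] at this
    split_ifs at this <;> omega

lemma cyc_e_eq (hn : 3 ≤ n) (u v : Fin n) :
    ((cycleGraph n).e u v : ℤ) =
      (if u = v - 1 then 1 else 0) + (if u = v + 1 then 1 else 0) := by
  have key : (u ≠ v ∧ (((v : ℕ) = ((u : ℕ) + 1) % n) ∨ ((u : ℕ) = ((v : ℕ) + 1) % n))) ↔
      (u = v - 1 ∨ u = v + 1) := by
    constructor
    · rintro ⟨hne, h | h⟩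
      · left
        have : v = u + 1 := Fin.ext (by rw [val_add_one' hn]; exact h)
        rw [this]; exact (add_sub_cancel_right u 1).symm
      · right
        exact Fin.ext (by rw [val_add_one' hn]; exact h)
    · rintro (h | h)
      · have hv : v = u + 1 := by rw [h]; exact (sub_add_cancel v 1).symm
        constructor
        · intro he; rw [he] at hv
          have := congrArg Fin.val hv
          rw [val_add_one' hn] at this
          have hvlt : (v:ℕ) < n := v.isLt
          rcases Nat.lt_or_ge ((v:ℕ)+1) n with h1 | h1
          · rw [Nat.mod_eq_of_lt h1] at this; omega
          · have h2 : (v:ℕ) + 1 = n := by omega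
            rw [h2, Nat.mod_self] at this; omega
        · left; rw [hv, val_add_one' hn]
      · constructor
        · intro he; rw [← he] at h
          have := congrArg Fin.val h
          rw [val_add_one' hn] at this
          have hvlt : (u:ℕ) < n := u.isLt
          rcases Nat.lt_or_ge ((u:ℕ)+1) n with h1 | h1
          · rw [Nat.mod_eq_of_lt h1] at this; omega
          · have h2 : (u:ℕ) + 1 = n := by omega
            rw [h2, Nat.mod_self] at this; omega
        · right; rw [h, val_add_one' hn]
  show ((if _ then (1:ℕ) else 0 : ℕ) : ℤ) = _
  by_cases hc : u = v - 1 ∨ u = v + 1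
  · rw [if_pos (key.mpr hc)]
    rcases hc with h | h
    · rw [if_pos h, if_neg (by rw [h]; exact sub_one_ne_add_one hn v)]; norm_num
    · rw [if_neg (by rw [h]; exact fun he => sub_one_ne_add_one hn v he.symm), if_pos h]; norm_num
  · rw [if_neg (fun hh => hc (key.mp hh))]
    push_neg at hc
    rw [if_neg hc.1, if_neg hc.2]; norm_num

lemma sum_mul_e (hn : 3 ≤ n) (x : Fin n → ℤ) (v : Fin n) :
    ∑ u, x u * ((cycleGraph n).e u v : ℤ) = x (v - 1) + x (v + 1) := by
  have : ∀ u : Fin n, x u * ((cycleGraph n).e u v : ℤ)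
      = (if u = v - 1 then x u else 0) + (if u = v + 1 then x u else 0) := by
    intro u
    rw [cyc_e_eq hn]
    split_ifs <;> ring
  simp only [this]
  rw [Finset.sum_add_distrib, Finset.sum_ite_eq', Finset.sum_ite_eq']
  simp

lemma cyc_vdeg (hn : 3 ≤ n) (v : Fin n) : ((cycleGraph n).vdeg v : ℤ) = 2 := by
  have : ((cycleGraph n).vdeg v : ℤ) = ∑ u, (1 : Fin n → ℤ) u * ((cycleGraph n).e u v : ℤ) := by
    unfold Multigraph.vdeg
    push_cast
    refine Finset.sum_congr rfl fun u _ => ?_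
    rw [(cycleGraph n).symm v u]; simp
  rw [this, sum_mul_e hn]
  simp

lemma lap_cycle (hn : 3 ≤ n) (x : Fin n → ℤ) (v : Fin n) :
    (cycleGraph n).lapApply x v = 2 * x v - x (v - 1) - x (v + 1) := by
  unfold Multigraph.lapApply
  rw [cyc_vdeg hn, sum_mul_e hn]
  ring

lemma linEquiv_iff (hn : 3 ≤ n) (f : Fin n → ℤ) :
    (cycleGraph n).LinEquiv f 0 ↔
      ∃ x : Fin n → ℤ, ∀ v, f v = x (v - 1) + x (v + 1) - 2 * x v := by
  unfold Multigraph.LinEquiv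
  constructor
  · rintro ⟨x, hx⟩
    refine ⟨x, fun v => ?_⟩
    have := congrFun hx v
    simp only [Pi.zero_apply, Pi.add_apply] at this
    rw [lap_cycle hn] at this
    linarith
  · rintro ⟨x, hx⟩
    refine ⟨x, funext fun v => ?_⟩
    simp only [Pi.zero_apply, Pi.add_apply]
    rw [lap_cycle hn]
    linarith [hx v]

end CycleAux
section CycleAux2

lemma abel_sum (g : ℕ → ℤ) (m : ℕ) :
    ∑ j ∈ Finset.range m, (∑ t ∈ Finset.range (j+1), g t)
      + ∑ t ∈ Finset.range m, (t:ℤ) * g t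
      = (m:ℤ) * ∑ t ∈ Finset.range m, g t := by
  induction m with
  | zero => simp
  | succ m ih =>
    rw [Finset.sum_range_succ (fun j => ∑ t ∈ Finset.range (j+1), g t),
      Finset.sum_range_succ (fun t => (t:ℤ) * g t)]
    push_cast
    linear_combination ih - (m : ℤ) * Finset.sum_range_succ g m

variable {n : ℕ} [NeZero n]

lemma forward_dvd (hn : 3 ≤ n) (f x : Fin n → ℤ)
    (hx : ∀ v, f v = x (v - 1) + x (v + 1) - 2 * x v) :
    (n : ℤ) ∣ ∑ v : Fin n, ((v : ℕ) : ℤ) * f v := by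
  rw [← ZMod.intCast_zmod_eq_zero_iff_dvd]
  push_cast
  set W : Fin n → ZMod n := fun v => ((v : ℕ) : ZMod n) with hW
  set X : Fin n → ZMod n := fun v => ((x v : ℤ) : ZMod n) with hX
  have hW1 : ∀ v : Fin n, W (v + 1) = W v + 1 := by
    intro v
    show (((v + 1 : Fin n) : ℕ) : ZMod n) = _
    rw [val_add_one' hn, ZMod.natCast_mod]
    push_cast
    rfl
  have hW2 : ∀ v : Fin n, W (v - 1) = W v - 1 := by
    intro v
    have := hW1 (v - 1)
    rw [sub_add_cancel] at this
    rw [this]; ring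
  have step : ∀ v : Fin n, ((f v : ℤ) : ZMod n) = X (v - 1) + X (v + 1) - 2 * X v := by
    intro v; rw [hx v]; push_cast; rfl
  calc ∑ v : Fin n, W v * ((f v : ℤ) : ZMod n)
      = ∑ v : Fin n, (W v * X (v - 1) + W v * X (v + 1) - 2 * (W v * X v)) := by
        refine Finset.sum_congr rfl fun v _ => ?_
        rw [step v]; ring
    _ = ∑ v : Fin n, W v * X (v - 1) + ∑ v : Fin n, W v * X (v + 1)
          - 2 * ∑ v : Fin n, W v * X v := by
        rw [Finset.sum_sub_distrib, Finset.sum_add_distrib, Finset.mul_sum]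
    _ = ∑ v : Fin n, W (v + 1) * X v + ∑ v : Fin n, W (v - 1) * X v
          - 2 * ∑ v : Fin n, W v * X v := by
        congr 2
        · exact Fintype.sum_equiv (Equiv.subRight (1 : Fin n)) _ _
            (fun v => by simp [Equiv.subRight, sub_add_cancel])
        · exact Fintype.sum_equiv (Equiv.addRight (1 : Fin n)) _ _
            (fun v => by simp [Equiv.addRight, add_sub_cancel_right])
    _ = 0 := by
        rw [← Finset.sum_add_distrib, Finset.mul_sum, ← Finset.sum_sub_distrib]
        refine Finset.sum_eq_zero fun v _ => ?_
        rw [hW1 v, hW2 v]; ring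

lemma backward_exists (hn : 3 ≤ n) (F : ℕ → ℤ)
    (hdF : ∑ i ∈ Finset.range n, F i = 0) (k : ℤ)
    (hS : ∑ i ∈ Finset.range n, (i : ℤ) * F i = n * k) :
    ∃ x : Fin n → ℤ, ∀ v : Fin n, F (v : ℕ) = x (v - 1) + x (v + 1) - 2 * x v := by
  set P : ℕ → ℤ := fun m => ∑ t ∈ Finset.range m, F t with hP
  set d : ℕ → ℤ := fun j => k + P (j + 1) with hd
  refine ⟨fun v => ∑ u ∈ Finset.range (v : ℕ), d u, fun v => ?_⟩
  have hPn : P n = 0 := hdF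
  have hdsum : ∑ u ∈ Finset.range n, d u = 0 := by
    have habel := abel_sum F n
    rw [hS] at habel
    have : ∑ u ∈ Finset.range n, d u
        = (n : ℤ) * k + ∑ j ∈ Finset.range n, P (j + 1) := by
      rw [hd]
      rw [Finset.sum_add_distrib, Finset.sum_const, Finset.card_range]
      push_cast
      ring
    rw [this]
    have : ∑ j ∈ Finset.range n, P (j + 1) = (n:ℤ) * P n - (n:ℤ) * k := by
      rw [hP]; linarith [habel]
    rw [this, hPn]; ring
  have hdlast : d (n - 1) = k := by
    have : n - 1 + 1 = n := by omega
    rw [hd]; simp only [this, hPn]; ring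
  have hsum_pred : ∑ u ∈ Finset.range (n - 1), d u = -k := by
    have h1 : n = (n - 1) + 1 := by omega
    have := Finset.sum_range_succ d (n - 1)
    rw [← h1, hdsum] at this
    linarith [hdlast]
  have hstep : ∀ a : ℕ, d (a + 1) - d a = F (a + 1) := by
    intro a
    simp only [hd, hP, Finset.sum_range_succ]
    ring
  have hva : ((v : ℕ) : ℕ) < n := v.isLt
  set a := (v : ℕ) with hav
  by_cases h0 : a = 0
  · have hv1 : ((v + 1 : Fin n) : ℕ) = 1 := by
      rw [val_add_one' hn, ← hav, h0, Nat.mod_eq_of_lt (by omega)]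
    have hv2 : ((v - 1 : Fin n) : ℕ) = n - 1 := by
      rw [val_sub_one' hn, ← hav, h0]; simp
    show F a = (∑ u ∈ Finset.range ((v - 1 : Fin n) : ℕ), d u)
        + (∑ u ∈ Finset.range ((v + 1 : Fin n) : ℕ), d u)
        - 2 * ∑ u ∈ Finset.range a, d u
    rw [hv1, hv2, h0, hsum_pred, Finset.sum_range_one, Finset.sum_range_zero]
    have hd0 : d 0 = k + F 0 := by simp [hd, hP, Finset.sum_range_one]
    linarith
  · by_cases h1 : a = n - 1
    · have hv1 : ((v + 1 : Fin n) : ℕ) = 0 := by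
        rw [val_add_one' hn, ← hav, h1]
        have : n - 1 + 1 = n := by omega
        rw [this, Nat.mod_self]
      have hv2 : ((v - 1 : Fin n) : ℕ) = n - 2 := by
        rw [val_sub_one' hn, ← hav, if_neg h0, h1]
        omega
      show F a = (∑ u ∈ Finset.range ((v - 1 : Fin n) : ℕ), d u)
          + (∑ u ∈ Finset.range ((v + 1 : Fin n) : ℕ), d u)
          - 2 * ∑ u ∈ Finset.range a, d u
      rw [hv1, hv2, h1]
      simp only [Finset.range_zero, Finset.sum_empty, add_zero]
      have e1 : n - 1 = (n - 2) + 1 := by omega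
      have e2 : ∑ u ∈ Finset.range (n-1), d u
          = ∑ u ∈ Finset.range (n-2), d u + d (n-2) := by
        rw [e1, Finset.sum_range_succ]
      have e3 : d (n - 1) - d (n - 2) = F (n - 1) := by
        have := hstep (n - 2)
        rwa [← e1] at this
      rw [hsum_pred] at e2
      linarith [hdlast]
    · have hv1 : ((v + 1 : Fin n) : ℕ) = a + 1 := by
        rw [val_add_one' hn, ← hav, Nat.mod_eq_of_lt (by omega)]
      have hv2 : ((v - 1 : Fin n) : ℕ) = a - 1 := by
        rw [val_sub_one' hn, ← hav, if_neg h0]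
      show F a = (∑ u ∈ Finset.range ((v - 1 : Fin n) : ℕ), d u)
          + (∑ u ∈ Finset.range ((v + 1 : Fin n) : ℕ), d u)
          - 2 * ∑ u ∈ Finset.range a, d u
      rw [hv1, hv2]
      have e1 : a = (a - 1) + 1 := by omega
      have e2 := Finset.sum_range_succ d (a - 1)
      rw [← e1] at e2
      have e3 : ∑ u ∈ Finset.range (a+1), d u
          = ∑ u ∈ Finset.range a, d u + d a := Finset.sum_range_succ d a
      have e4 : d a - d (a - 1) = F a := by
        have := hstep (a - 1)
        rwa [← e1] at this
      linarith

end CycleAux2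

/-- a divisor `f` of degree `0` on the cycle `C_n` (`n ≥ 3`),
with `f i` the value `f_{i+1}` at vertex `v_{i+1}`, is good (linearly
equivalent to `0`) iff `f_1 + 2 f_2 + ⋯ + (n−1) f_{n−1} ≡ 0 (mod n)`. -/
theorem good_iff_on_cycle (n : ℕ) (hn : 3 ≤ n) (f : Fin n → ℤ)
    (hdeg : degree f = 0) :
    (cycleGraph n).LinEquiv f 0 ↔
      (n : ℤ) ∣ ∑ i ∈ Finset.range (n - 1),
        ((i : ℤ) + 1) * f ⟨i % n, Nat.mod_lt i (by omega)⟩ := by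
  haveI : NeZero n := ⟨by omega⟩
  have hpos : 0 < n := by omega
  set F : ℕ → ℤ := fun i => f ⟨i % n, Nat.mod_lt i hpos⟩ with hF
  have hgoal : (∑ i ∈ Finset.range (n - 1),
      ((i : ℤ) + 1) * f ⟨i % n, Nat.mod_lt i (by omega)⟩)
      = ∑ i ∈ Finset.range (n - 1), ((i : ℤ) + 1) * F i :=
    Finset.sum_congr rfl fun i _ => rfl
  have hFv : ∀ v : Fin n, F (v : ℕ) = f v := by
    intro v
    exact congrArg f (Fin.ext (Nat.mod_eq_of_lt v.isLt))
  have hdF : ∑ i ∈ Finset.range n, F i = 0 := by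
    rw [← Fin.sum_univ_eq_sum_range F n]
    simp only [hFv]
    exact hdeg
  have hS_fin : ∑ i ∈ Finset.range n, (i : ℤ) * F i
      = ∑ v : Fin n, ((v : ℕ) : ℤ) * f v := by
    rw [← Fin.sum_univ_eq_sum_range (fun i => (i : ℤ) * F i) n]
    exact Finset.sum_congr rfl fun v _ => by rw [hFv]
  have hTS : ∑ i ∈ Finset.range (n - 1), ((i : ℤ) + 1) * F i
      = (∑ i ∈ Finset.range n, (i : ℤ) * F i) - (n : ℤ) * F (n - 1) := by
    have h1 := Finset.sum_range_succ (fun i => (i : ℤ) * F i) (n - 1)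
    have h2 := Finset.sum_range_succ F (n - 1)
    rw [show n - 1 + 1 = n from by omega] at h1 h2
    have h3 : ∑ i ∈ Finset.range (n - 1), ((i : ℤ) + 1) * F i
        = ∑ i ∈ Finset.range (n - 1), (i : ℤ) * F i
          + ∑ i ∈ Finset.range (n - 1), F i := by
      rw [← Finset.sum_add_distrib]
      exact Finset.sum_congr rfl fun i _ => by ring
    have hc : ((n - 1 : ℕ) : ℤ) = (n : ℤ) - 1 := by omega
    have h4 : ∑ i ∈ Finset.range (n - 1), F i = - F (n - 1) := by
      rw [hdF] at h2; linarith
    rw [h3, h4, h1, hc]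
    ring
  rw [hgoal, hTS]
  constructor
  · intro hlin
    obtain ⟨x, hx⟩ := (linEquiv_iff hn f).mp hlin
    have hdvd : (n : ℤ) ∣ ∑ i ∈ Finset.range n, (i : ℤ) * F i := by
      rw [hS_fin]; exact forward_dvd hn f x hx
    exact dvd_sub hdvd (dvd_mul_right _ _)
  · intro hdvd
    have hdvdS : (n : ℤ) ∣ ∑ i ∈ Finset.range n, (i : ℤ) * F i := by
      have := dvd_add hdvd (dvd_mul_right (n : ℤ) (F (n - 1)))
      simpa using this
    obtain ⟨k, hk⟩ := hdvdS
    obtain ⟨x, hx⟩ := backward_exists hn F hdF k hk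
    exact (linEquiv_iff hn f).mpr ⟨x, fun v => by rw [← hFv v]; exact hx v⟩
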